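/- Let A ∈ 𝒫_π be a canonical plane matrix of type π with parameters λ_{j,i}, and for λ ∈ ℂ let μ(λ,i) be the multiplicity of λ in the multiset [λ_{i,1},...,λ_{i,l_i}] and α(λ,j) = μ(λ,1) + ... + μ(λ,j). Then for every j ∈ {1,...,t}, the matrix G_j is similar to the direct sum ⊕_λ J_{α(λ,j)}(λ), where λ ranges over the distinct complex numbers with α(λ,j) > 0 and J_k(λ) is the k×k Jordan block with eigenvalue λ; in particular G_j has exactly one Jordan block for each of its eigenvalues. -/

import Mathlib

/- Common setup: canonical plane matrices (P. Daugulis, "A parametrization of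
matrix conjugacy orbit sets as unions of affine planes"). -/

open Matrix Polynomial

noncomputable section

/-- `ℕ`-indexed entries of the generalized companion matrix `R_l(y₁,...,y_l)`:
subdiagonal entries `1`, last column given (via Vieta) by the coefficients of
`∏ (X - yᵢ)` (entry in row `k` of the last column is
`(−1)^{l+1−k}·e_{l+1−k}(y)`), all other entries `0`. -/
def genCompE (l : ℕ) (y : Fin l → ℂ) (i j : ℕ) : ℂ :=
  if i < l ∧ j < l then
    (if i = j + 1 then 1
     else if j = l - 1 then -((∏ k, (X - C (y k))).coeff i)
     else 0)
  else 0

/-- The generalized companion matrix `R_l(y₁,...,y_l)`, i.e. the companion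
matrix of `∏ (X - yᵢ)`. -/
def genComp (l : ℕ) (y : Fin l → ℂ) : Matrix (Fin l) (Fin l) ℂ :=
  Matrix.of fun i j => genCompE l y i j

/-- A partition of `n`, recorded by its stacks: `t` stacks, with strictly
decreasing positive distinct values `m 0 > m 1 > ... > m (t-1)` and positive
lengths `l j`, so that the partition consists of `l j` copies of `m j` and
`n = ∑ j, l j * m j`. -/
structure StackPartition (n : ℕ) where
  t : ℕ
  m : Fin t → ℕ
  l : Fin t → ℕ
  m_pos : ∀ j, 0 < m j
  l_pos : ∀ j, 0 < l j
  m_strictAnti : ∀ i j : Fin t, i < j → m j < m i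
  sum_eq : (∑ j, l j * m j) = n

namespace StackPartition

variable {n : ℕ} (P : StackPartition n)

/-- `m j` extended by `0` beyond the number of stacks (`0`-indexed), so
`mE 0 = m_1` and `mE t = m_{t+1} = 0` in the paper's notation. -/
def mE (j : ℕ) : ℕ := if h : j < P.t then P.m ⟨j, h⟩ else 0

/-- Row/column offset of the `j`-th diagonal block (`0`-indexed):
`S j = ∑_{i<j} l i * m i`. -/
def S (j : ℕ) : ℕ := ∑ i : Fin P.t, if (i : ℕ) < j then P.l i * P.m i else 0

/-- `sE j = ∑_{i<j} l i`; the paper's `s_j` (for `1`-indexed `j`) is `sE j`. -/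
def sE (j : ℕ) : ℕ := ∑ i : Fin P.t, if (i : ℕ) < j then P.l i else 0

/-- The multiset of addends of the partition. -/
def parts : Multiset ℕ := ∑ j : Fin P.t, Multiset.replicate (P.l j) (P.m j)

/-- Offsets for the direct sum `⊕_j (m_j - m_{j+1}) G_j`. -/
def T (k : ℕ) : ℕ :=
  ∑ i : Fin P.t, if (i : ℕ) < k then (P.m i - P.mE ((i : ℕ) + 1)) * P.sE ((i : ℕ) + 1) else 0

end StackPartition

/-- Parameters `λ_{j,1},...,λ_{j,l_j}` for each stack `j`. -/
def Params {n : ℕ} (P : StackPartition n) := (j : Fin P.t) → Fin (P.l j) → ℂ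

/-- `ℕ`-indexed entry of the canonical plane matrix of type `P` with
parameters `lam`: the `j`-th diagonal block (of size `l j * m j`, occupying
rows and columns `[S j, S (j+1))`) is `R_{l j}(lam j) ⊗ E_{m j}` (row index
`a` of the block encodes the pair `(a / m j, a % m j)`), the block directly
below it occupies the first `m (j+1)` rows of block `j+1` and the last `m j`
columns of block `j` and equals `[O | E_{m (j+1)}]`, and all other entries
vanish. -/
def cpmEntry {n : ℕ} (P : StackPartition n) (lam : Params P) (r c : ℕ) : ℂ :=
  (∑ j : Fin P.t,
    if P.S j ≤ r ∧ r < P.S ((j : ℕ) + 1) ∧ P.S j ≤ c ∧ c < P.S ((j : ℕ) + 1)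
        ∧ (r - P.S j) % P.m j = (c - P.S j) % P.m j then
      genCompE (P.l j) (lam j) ((r - P.S j) / P.m j) ((c - P.S j) / P.m j)
    else 0)
  +
  (∑ j : Fin P.t,
    if P.S ((j : ℕ) + 1) ≤ r ∧ r < P.S ((j : ℕ) + 1) + P.mE ((j : ℕ) + 1)
        ∧ P.S ((j : ℕ) + 1) - P.m j ≤ c ∧ c < P.S ((j : ℕ) + 1)
        ∧ c - (P.S ((j : ℕ) + 1) - P.m j)
            = (P.m j - P.mE ((j : ℕ) + 1)) + (r - P.S ((j : ℕ) + 1)) then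
      (1 : ℂ)
    else 0)

/-- The canonical plane matrix of type `P` with parameters `lam`. -/
def cpm {n : ℕ} (P : StackPartition n) (lam : Params P) : Matrix (Fin n) (Fin n) ℂ :=
  Matrix.of fun r c => cpmEntry P lam r c

/-- The set `𝒫_π` of canonical plane matrices of type `P`. -/
def planeSet {n : ℕ} (P : StackPartition n) : Set (Matrix (Fin n) (Fin n) ℂ) :=
  { A | ∃ lam : Params P, A = cpm P lam }

/-- Similarity (conjugacy) of square complex matrices. -/
def MatrixSimilar {n : ℕ} (A B : Matrix (Fin n) (Fin n) ℂ) : Prop :=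
  ∃ Q : Matrix (Fin n) (Fin n) ℂ, IsUnit Q.det ∧ A * Q = Q * B

/-- The `A`-cyclic subspace `ℂ[A]·v`, spanned by `v, Av, A²v, ...`. -/
def cyclicSpan {n : ℕ} (A : Matrix (Fin n) (Fin n) ℂ) (v : Fin n → ℂ) :
    Submodule ℂ (Fin n → ℂ) :=
  Submodule.span ℂ (Set.range fun k : ℕ => (A ^ k) *ᵥ v)

/-- `ℕ`-indexed entry of the matrix
`G_j = ⊕_{i≤j} C(a_{i,0},...,a_{i,l_i−1}) + Σ_{i<j} E_{s_i+1,s_i}`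
(`0`-indexed `j`; the `i`-th diagonal block is the companion matrix of
`∏_k (X - λ_{i,k})`, and the matrix units sit just below the lower-left
corners of the diagonal blocks). -/
def GEntry {n : ℕ} (P : StackPartition n) (lam : Params P) (j r c : ℕ) : ℂ :=
  (∑ i : Fin P.t,
    if (i : ℕ) ≤ j ∧ P.sE i ≤ r ∧ r < P.sE ((i : ℕ) + 1)
        ∧ P.sE i ≤ c ∧ c < P.sE ((i : ℕ) + 1) then
      genCompE (P.l i) (lam i) (r - P.sE i) (c - P.sE i)
    else 0)
  +
  (∑ i : Fin P.t,
    if 1 ≤ (i : ℕ) ∧ (i : ℕ) ≤ j ∧ r = P.sE i ∧ c + 1 = P.sE i then (1 : ℂ) else 0)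

/-- The `s_j × s_j` matrix `G_j` (`0`-indexed `j`, of size `sE (j+1)`). -/
def Gm {n : ℕ} (P : StackPartition n) (lam : Params P) (j : Fin P.t) :
    Matrix (Fin (P.sE ((j : ℕ) + 1))) (Fin (P.sE ((j : ℕ) + 1))) ℂ :=
  Matrix.of fun r c => GEntry P lam j r c

/-- The multiset `[λ_{j,1},...,λ_{j,l_j}]` of stack `j`. -/
def stackMultiset {n : ℕ} (P : StackPartition n) (lam : Params P) (j : Fin P.t) :
    Multiset ℂ :=
  Multiset.map (lam j) Finset.univ.val

/-- `μ(z, j)`: multiplicity of `z` in the multiset `[λ_{j,1},...,λ_{j,l_j}]`. -/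
def mu {n : ℕ} (P : StackPartition n) (lam : Params P) (z : ℂ) (j : Fin P.t) : ℕ :=
  (stackMultiset P lam j).count z

/-- The multiset of all parameters of stacks `0,...,j` (`0`-indexed), so
`α(z, j) = (lamUpTo P lam j).count z`. -/
def lamUpTo {n : ℕ} (P : StackPartition n) (lam : Params P) (j : ℕ) : Multiset ℂ :=
  ∑ i : Fin P.t, if (i : ℕ) ≤ j then stackMultiset P lam i else 0

/-- Index type for the direct sum of one Jordan block per distinct element of a
multiset `s`, the block for `z` having size `s.count z`. -/
abbrev JordanIdx (s : Multiset ℂ) : Type := Σ z : s.toFinset, Fin (s.count z.val)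

/-- The direct sum `⊕_z J_{s.count z}(z)` over the distinct elements `z` of the
multiset `s` (lower Jordan blocks: eigenvalue on the diagonal, ones on the
subdiagonal). -/
def jordanOfMultiset (s : Multiset ℂ) : Matrix (JordanIdx s) (JordanIdx s) ℂ :=
  Matrix.of fun x y =>
    if x.1 = y.1 then
      (if (x.2 : ℕ) = (y.2 : ℕ) then x.1.val
       else if (x.2 : ℕ) = (y.2 : ℕ) + 1 then 1 else 0)
    else 0

/-- `0`-indexed Weyr characteristic: `weyr B z i = ω_{i+1}` where
`ω_k = dim ker (B - zI)^k − dim ker (B - zI)^{k-1}`. -/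
def weyr {n : ℕ} (B : Matrix (Fin n) (Fin n) ℂ) (z : ℂ) (i : ℕ) : ℕ :=
  Module.finrank ℂ (LinearMap.ker ((B - z • 1).mulVecLin ^ (i + 1)))
    - Module.finrank ℂ (LinearMap.ker ((B - z • 1).mulVecLin ^ i))

/-- `ℕ`-indexed entry of the block diagonal matrix `⊕_j (m_j - m_{j+1}) G_j`
(for each `j`, exactly `m j - m (j+1)` consecutive copies of `G_j`). -/
def dsEntry {n : ℕ} (P : StackPartition n) (lam : Params P) (r c : ℕ) : ℂ :=
  ∑ j : Fin P.t,
    if P.T j ≤ r ∧ r < P.T ((j : ℕ) + 1) ∧ P.T j ≤ c ∧ c < P.T ((j : ℕ) + 1)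
        ∧ (r - P.T j) / P.sE ((j : ℕ) + 1) = (c - P.T j) / P.sE ((j : ℕ) + 1) then
      GEntry P lam j ((r - P.T j) % P.sE ((j : ℕ) + 1)) ((c - P.T j) % P.sE ((j : ℕ) + 1))
    else 0

/-- Index type for `⊕_{j=1}^{t} (m_j - m_{j+1}) (⊕_z J_{α(z,j)}(z))`. -/
abbrev FullJordanIdx {n : ℕ} (P : StackPartition n) (lam : Params P) : Type :=
  Σ j : Fin P.t, Fin (P.m j - P.mE ((j : ℕ) + 1)) × JordanIdx (lamUpTo P lam (j : ℕ))

/-- The matrix `⊕_{j=1}^{t} (m_j - m_{j+1}) (⊕_z J_{α(z,j)}(z))`: for each `j`,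
`m j - m (j+1)` copies of the direct sum, over the distinct `z` with
`α(z,j) = μ(z,1) + ... + μ(z,j) > 0`, of the Jordan blocks `J_{α(z,j)}(z)`. -/
def fullJordan {n : ℕ} (P : StackPartition n) (lam : Params P) :
    Matrix (FullJordanIdx P lam) (FullJordanIdx P lam) ℂ :=
  Matrix.of fun x y =>
    if h : x.1 = y.1 then
      (fun y2 : Fin (P.m x.1 - P.mE ((x.1 : ℕ) + 1)) × JordanIdx (lamUpTo P lam (x.1 : ℕ)) =>
        if x.2.1 = y2.1 then jordanOfMultiset (lamUpTo P lam (x.1 : ℕ)) x.2.2 y2.2 else 0)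
      (cast (congrArg (fun j : Fin P.t =>
        Fin (P.m j - P.mE ((j : ℕ) + 1)) × JordanIdx (lamUpTo P lam (j : ℕ))) h.symm) y.2)
    else 0

end

/- ======================= Auxiliary development ======================= -/

noncomputable section StmtAux

open Matrix Polynomial

/-! ### Generic linear algebra: cyclic vectors and companion-type matrices -/

/-- standard basis vector with `ℕ` index (zero if out of range). -/
def evA (N k : ℕ) : Fin N → ℂ := fun r => if (r : ℕ) = k then 1 else 0

lemma evA_out {N k : ℕ} (hk : N ≤ k) : evA N k = 0 := by
  funext r
  have : (r : ℕ) ≠ k := by omega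
  simp [evA, this]

lemma mulVec_evA {N : ℕ} (M : Matrix (Fin N) (Fin N) ℂ) {k : ℕ} (hk : k < N) (r : Fin N) :
    (M *ᵥ evA N k) r = M r ⟨k, hk⟩ := by
  simp only [Matrix.mulVec, dotProduct, evA]
  rw [Finset.sum_eq_single (⟨k, hk⟩ : Fin N)]
  · simp
  · intro b _ hb
    have : (b : ℕ) ≠ k := fun h => hb (Fin.ext h)
    simp [this]
  · simp

/-- matrix whose `k`-th column is `A^k *ᵥ v`. -/
def powMatA {N : ℕ} (A : Matrix (Fin N) (Fin N) ℂ) (v : Fin N → ℂ) :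
    Matrix (Fin N) (Fin N) ℂ :=
  Matrix.of fun r k => ((A ^ (k : ℕ)) *ᵥ v) r

/-- companion-type matrix of a polynomial. -/
def compMA (N : ℕ) (p : ℂ[X]) : Matrix (Fin N) (Fin N) ℂ :=
  Matrix.of fun r c =>
    if (r : ℕ) = (c : ℕ) + 1 then 1 else if (c : ℕ) = N - 1 then -p.coeff r else 0

lemma sum_mulVecA {m : Type*} [Fintype m] {ι : Type*} (s : Finset ι)
    (f : ι → Matrix m m ℂ) (v : m → ℂ) :
    (∑ i ∈ s, f i) *ᵥ v = ∑ i ∈ s, (f i) *ᵥ v := by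
  classical
  induction s using Finset.cons_induction with
  | empty => simp [Matrix.zero_mulVec]
  | cons a s has ih => rw [Finset.sum_cons, Finset.sum_cons, Matrix.add_mulVec, ih]

lemma pow_mulVec_topA {N : ℕ} (A : Matrix (Fin N) (Fin N) ℂ) (v : Fin N → ℂ) (p : ℂ[X])
    (hm : p.Monic) (hd : p.natDegree = N) (hp : (Polynomial.aeval A p) *ᵥ v = 0) :
    (A ^ N) *ᵥ v = -∑ i ∈ Finset.range N, p.coeff i • ((A ^ i) *ᵥ v) := by
  have h1 : (Polynomial.aeval A p) = ∑ i ∈ Finset.range (N + 1), p.coeff i • A ^ i := by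
    rw [Polynomial.aeval_eq_sum_range, hd]
  rw [h1, Finset.sum_range_succ] at hp
  have hc : p.coeff N = 1 := by rw [← hd]; exact hm.coeff_natDegree
  rw [hc, one_smul, Matrix.add_mulVec, sum_mulVecA] at hp
  have : ∀ i, (p.coeff i • A ^ i) *ᵥ v = p.coeff i • ((A ^ i) *ᵥ v) := fun i =>
    Matrix.smul_mulVec _ _ _
  simp only [this] at hp
  linear_combination (norm := module) hp

lemma key_conjA {N : ℕ} (A : Matrix (Fin N) (Fin N) ℂ) (v : Fin N → ℂ) (p : ℂ[X])
    (hm : p.Monic) (hd : p.natDegree = N) (hp : (Polynomial.aeval A p) *ᵥ v = 0) :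
    A * powMatA A v = powMatA A v * compMA N p := by
  ext r k
  have hL : (A * powMatA A v) r k = ((A ^ ((k : ℕ) + 1)) *ᵥ v) r := by
    have : (A * powMatA A v) r k = (A *ᵥ ((A ^ (k : ℕ)) *ᵥ v)) r := by
      simp [Matrix.mul_apply, powMatA, Matrix.mulVec, dotProduct]
    rw [this, Matrix.mulVec_mulVec, ← pow_succ']
  rw [hL]
  rcases eq_or_ne (k : ℕ) (N - 1) with hk | hk
  · have hkN : (k : ℕ) + 1 = N := by omega
    have hcomp : ∀ m : Fin N, compMA N p m k = -p.coeff m := by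
      intro m
      have h1 : (m : ℕ) ≠ (k : ℕ) + 1 := by omega
      simp only [compMA, Matrix.of_apply]
      rw [if_neg h1, if_pos hk]
    have : (powMatA A v * compMA N p) r k
        = ∑ m : Fin N, ((A ^ (m : ℕ)) *ᵥ v) r * (-p.coeff m) := by
      simp [Matrix.mul_apply, powMatA, hcomp]
    rw [this, hkN, pow_mulVec_topA A v p hm hd hp,
      ← Fin.sum_univ_eq_sum_range (fun i => p.coeff i • ((A ^ i) *ᵥ v))]
    simp only [Pi.neg_apply, Finset.sum_apply, Pi.smul_apply, smul_eq_mul, mul_neg,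
      ← Finset.sum_neg_distrib]
    exact Finset.sum_congr rfl fun x _ => by ring
  · have hkN : (k : ℕ) + 1 < N := by omega
    have hcomp : ∀ m : Fin N, compMA N p m k = if (m : ℕ) = (k : ℕ) + 1 then 1 else 0 := by
      intro m; simp [compMA, hk]
    have : (powMatA A v * compMA N p) r k
        = ∑ m : Fin N, ((A ^ (m : ℕ)) *ᵥ v) r * (if (m : ℕ) = (k : ℕ) + 1 then 1 else 0) := by
      simp [Matrix.mul_apply, powMatA, hcomp]
    rw [this, Finset.sum_eq_single (⟨(k : ℕ) + 1, hkN⟩ : Fin N)]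
    · simp
    · intro b _ hb
      have : (b : ℕ) ≠ (k : ℕ) + 1 := fun h => hb (Fin.ext h)
      simp [this]
    · simp

lemma similar_of_conjA {N : ℕ} (A B C QA QB : Matrix (Fin N) (Fin N) ℂ)
    (hA : A * QA = QA * C) (hB : B * QB = QB * C)
    (hQA : IsUnit QA.det) (hQB : IsUnit QB.det) :
    MatrixSimilar A B := by
  refine ⟨QA * QB⁻¹, ?_, ?_⟩
  · rw [Matrix.det_mul]
    exact hQA.mul (Matrix.isUnit_nonsing_inv_det QB hQB)
  · have h1 : C * QB⁻¹ = QB⁻¹ * B := by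
      calc C * QB⁻¹ = QB⁻¹ * QB * (C * QB⁻¹) := by rw [Matrix.nonsing_inv_mul _ hQB, one_mul]
        _ = QB⁻¹ * (QB * C) * QB⁻¹ := by
            rw [Matrix.mul_assoc, Matrix.mul_assoc, Matrix.mul_assoc]
        _ = QB⁻¹ * (B * QB) * QB⁻¹ := by rw [hB]
        _ = QB⁻¹ * B * (QB * QB⁻¹) := by
            rw [Matrix.mul_assoc, Matrix.mul_assoc, Matrix.mul_assoc]
        _ = QB⁻¹ * B := by rw [Matrix.mul_nonsing_inv _ hQB, Matrix.mul_one]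
    calc A * (QA * QB⁻¹) = (A * QA) * QB⁻¹ := by rw [Matrix.mul_assoc]
      _ = QA * (C * QB⁻¹) := by rw [hA, Matrix.mul_assoc]
      _ = QA * (QB⁻¹ * B) := by rw [h1]
      _ = QA * QB⁻¹ * B := by rw [Matrix.mul_assoc]

lemma det_one_of_unitriangularA {N : ℕ} (Q : Matrix (Fin N) (Fin N) ℂ)
    (h0 : ∀ r k : Fin N, (k : ℕ) < (r : ℕ) → Q r k = 0)
    (h1 : ∀ r : Fin N, Q r r = 1) : Q.det = 1 := by
  have : Q.BlockTriangular id := fun i j h => h0 i j h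
  rw [Matrix.det_of_upperTriangular this]
  simp [h1]

/-! ### Jordan side -/

/-- cyclic vector for the Jordan matrix. -/
def jvA (s : Multiset ℂ) : JordanIdx s → ℂ := fun x => if (x.2 : ℕ) = 0 then 1 else 0

lemma jordan_pow_mulVecA (s : Multiset ℂ) (k : ℕ) (x : JordanIdx s) :
    (((jordanOfMultiset s) ^ k) *ᵥ jvA s) x
      = (((X : ℂ[X]) + C x.1.val) ^ k).coeff (x.2 : ℕ) := by
  induction k generalizing x with
  | zero => simp [jvA, Polynomial.coeff_one, eq_comm]
  | succ k ih =>
    have hstep : (((jordanOfMultiset s) ^ (k+1)) *ᵥ jvA s) x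
        = ∑ y : JordanIdx s,
            jordanOfMultiset s x y * (((jordanOfMultiset s) ^ k) *ᵥ jvA s) y := by
      rw [pow_succ', ← Matrix.mulVec_mulVec]
      simp [Matrix.mulVec, dotProduct]
    rw [hstep]
    obtain ⟨z, m⟩ := x
    have hsum : ∑ y : JordanIdx s, jordanOfMultiset s ⟨z, m⟩ y
          * (((jordanOfMultiset s) ^ k) *ᵥ jvA s) y
        = ∑ z' : s.toFinset, ∑ m' : Fin (s.count z'.val),
            jordanOfMultiset s ⟨z, m⟩ ⟨z', m'⟩
              * (((jordanOfMultiset s) ^ k) *ᵥ jvA s) ⟨z', m'⟩ := by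
      rw [← Finset.univ_sigma_univ, Finset.sum_sigma]
    rw [hsum]
    rw [Finset.sum_eq_single z]
    · have hinner : ∀ m' : Fin (s.count z.val),
          jordanOfMultiset s ⟨z, m⟩ ⟨z, m'⟩ * (((jordanOfMultiset s) ^ k) *ᵥ jvA s) ⟨z, m'⟩
          = (if (m' : ℕ) = (m : ℕ)
              then z.val * (((jordanOfMultiset s) ^ k) *ᵥ jvA s) ⟨z, m'⟩ else 0)
            + (if (m' : ℕ) + 1 = (m : ℕ)
              then (((jordanOfMultiset s) ^ k) *ᵥ jvA s) ⟨z, m'⟩ else 0) := by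
        intro m'
        simp only [jordanOfMultiset, Matrix.of_apply, if_pos rfl]
        split_ifs <;> first | ring1 | (exfalso; omega)
      rw [Finset.sum_congr rfl (fun m' _ => hinner m'), Finset.sum_add_distrib]
      have e1 : ∑ m' : Fin (s.count z.val),
          (if (m' : ℕ) = (m : ℕ)
            then z.val * (((jordanOfMultiset s) ^ k) *ᵥ jvA s) ⟨z, m'⟩ else 0)
          = z.val * (((jordanOfMultiset s) ^ k) *ᵥ jvA s) ⟨z, m⟩ := by
        rw [Finset.sum_eq_single m]
        · simp
        · intro b _ hb
          rw [if_neg (fun hh => hb (Fin.ext hh))]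
        · simp
      have e2 : ∑ m' : Fin (s.count z.val),
          (if (m' : ℕ) + 1 = (m : ℕ)
            then (((jordanOfMultiset s) ^ k) *ᵥ jvA s) ⟨z, m'⟩ else 0)
          = if h : 0 < (m : ℕ) then
              (((jordanOfMultiset s) ^ k) *ᵥ jvA s) ⟨z, ⟨(m : ℕ) - 1, by omega⟩⟩ else 0 := by
        split_ifs with h
        · rw [Finset.sum_eq_single (⟨(m : ℕ) - 1, by omega⟩ : Fin (s.count z.val))]
          · rw [if_pos (by simp; omega)]
          · intro b _ hb
            rw [if_neg (fun hh => hb (Fin.ext (show (b : ℕ) = (m : ℕ) - 1 by omega)))]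
          · simp
        · apply Finset.sum_eq_zero
          intro b _
          rw [if_neg (by omega)]
      rw [e1, e2, ih, pow_succ, mul_add, Polynomial.coeff_add, Polynomial.coeff_mul_C]
      have hX : ((((X : ℂ[X]) + C z.val) ^ k) * X).coeff (m : ℕ)
          = if 1 ≤ (m : ℕ) then (((X : ℂ[X]) + C z.val) ^ k).coeff ((m : ℕ) - 1) else 0 := by
        rw [← pow_one (X : ℂ[X]), Polynomial.coeff_mul_X_pow']
      rw [hX]
      split_ifs with h1 h2 h3
      · rw [ih]; ring
      · omega
      · omega
      · ring
    · intro z' _ hz'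
      apply Finset.sum_eq_zero
      intro m' _
      have : jordanOfMultiset s ⟨z, m⟩ ⟨z', m'⟩ = 0 := by
        simp only [jordanOfMultiset, Matrix.of_apply]
        rw [if_neg (fun hh => hz' hh.symm)]
      rw [this, zero_mul]
    · intro h
      exact absurd (Finset.mem_univ z) h

lemma jordan_aeval_mulVecA (s : Multiset ℂ) (r : ℂ[X]) (x : JordanIdx s) :
    ((Polynomial.aeval (jordanOfMultiset s) r) *ᵥ jvA s) x
      = (r.comp ((X : ℂ[X]) + C x.1.val)).coeff (x.2 : ℕ) := by
  induction r using Polynomial.induction_on' with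
  | add p q hp hq =>
    rw [map_add, Matrix.add_mulVec, Pi.add_apply, hp, hq, Polynomial.add_comp,
      Polynomial.coeff_add]
  | monomial k a =>
    rw [Polynomial.aeval_monomial, Polynomial.monomial_comp, ← Algebra.smul_def,
      Matrix.smul_mulVec, Pi.smul_apply, smul_eq_mul, jordan_pow_mulVecA,
      Polynomial.coeff_C_mul]

lemma jordan_aeval_prodA (s : Multiset ℂ) :
    (Polynomial.aeval (jordanOfMultiset s)
        ((s.map (fun z => (X : ℂ[X]) - C z)).prod)) *ᵥ jvA s = 0 := by
  funext x
  simp only [Pi.zero_apply]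
  rw [jordan_aeval_mulVecA]
  have hz : x.1.val ∈ s.toFinset := x.1.property
  have hfact : (s.map (fun w => (X : ℂ[X]) - C w)).prod
      = ((X : ℂ[X]) - C x.1.val) ^ (s.count x.1.val)
        * ∏ w ∈ s.toFinset.erase x.1.val, ((X : ℂ[X]) - C w) ^ (s.count w) := by
    rw [Finset.prod_multiset_map_count]
    exact (Finset.mul_prod_erase _ _ hz).symm
  rw [hfact, Polynomial.mul_comp, Polynomial.pow_comp, Polynomial.sub_comp,
    Polynomial.X_comp, Polynomial.C_comp, add_sub_cancel_right, mul_comm,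
    Polynomial.coeff_mul_X_pow']
  rw [if_neg (by have := x.2.isLt; omega)]

lemma jordan_indepA (s : Multiset ℂ) (N : ℕ) (hN : Multiset.card s = N) (cv : Fin N → ℂ)
    (h : ∀ x : JordanIdx s,
      ∑ k : Fin N, cv k * (((jordanOfMultiset s) ^ (k : ℕ)) *ᵥ jvA s) x = 0) :
    cv = 0 := by
  set J := jordanOfMultiset s with hJ
  set r : ℂ[X] := ∑ k : Fin N, C (cv k) * X ^ (k : ℕ) with hr
  have haev : ∀ x : JordanIdx s,
      ((Polynomial.aeval J r) *ᵥ jvA s) x = ∑ k : Fin N, cv k * ((J ^ (k : ℕ)) *ᵥ jvA s) x := by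
    intro x
    have h1 : Polynomial.aeval J r = ∑ k : Fin N, cv k • J ^ (k : ℕ) := by
      rw [hr, map_sum]
      refine Finset.sum_congr rfl fun k _ => ?_
      rw [_root_.map_mul, Polynomial.aeval_C, map_pow, Polynomial.aeval_X, ← Algebra.smul_def]
    rw [h1, sum_mulVecA]
    simp only [Finset.sum_apply, Matrix.smul_mulVec, Pi.smul_apply, smul_eq_mul]
  have hxzero : ∀ x : JordanIdx s, (r.comp ((X : ℂ[X]) + C x.1.val)).coeff (x.2 : ℕ) = 0 := by
    intro x
    rw [← jordan_aeval_mulVecA, haev, h]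
  have hdvd1 : ∀ z ∈ s.toFinset, ((X : ℂ[X]) - C z) ^ (s.count z) ∣ r := by
    intro z hz
    have h1 : (X : ℂ[X]) ^ (s.count z) ∣ r.comp ((X : ℂ[X]) + C z) := by
      rw [Polynomial.X_pow_dvd_iff]
      intro d hd
      exact hxzero ⟨⟨z, hz⟩, ⟨d, hd⟩⟩
    obtain ⟨g, hg⟩ := h1
    have h2 : r = (r.comp ((X : ℂ[X]) + C z)).comp ((X : ℂ[X]) - C z) := by
      rw [Polynomial.comp_assoc, Polynomial.add_comp, Polynomial.X_comp, Polynomial.C_comp,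
        sub_add_cancel, Polynomial.comp_X]
    rw [h2, hg, Polynomial.mul_comp, Polynomial.pow_comp, Polynomial.X_comp]
    exact Dvd.intro _ rfl
  have hmon : ((s.map (fun z => (X : ℂ[X]) - C z)).prod).Monic :=
    Polynomial.monic_multiset_prod_of_monic _ _ fun z _ => Polynomial.monic_X_sub_C z
  have hdeg : ((s.map (fun z => (X : ℂ[X]) - C z)).prod).natDegree = N := by
    rw [Polynomial.natDegree_multiset_prod_of_monic _ (by
      intro f hf
      obtain ⟨z, _, rfl⟩ := Multiset.mem_map.mp hf
      exact Polynomial.monic_X_sub_C z)]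
    rw [Multiset.map_map]
    simp only [Function.comp, Polynomial.natDegree_X_sub_C]
    rw [Multiset.map_const', Multiset.sum_replicate, smul_eq_mul, mul_one, hN]
  have hdvdp : (s.map (fun z => (X : ℂ[X]) - C z)).prod ∣ r := by
    rw [Finset.prod_multiset_map_count]
    apply Finset.prod_dvd_of_coprime
    · intro a ha b hb hab
      exact (Polynomial.isCoprime_X_sub_C_of_isUnit_sub
        ((sub_ne_zero.mpr hab).isUnit)).pow
    · exact fun z hz => hdvd1 z hz
  have hrdeg : r.degree < ((s.map (fun z => (X : ℂ[X]) - C z)).prod).degree := by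
    rw [hmon.ne_zero |> Polynomial.degree_eq_natDegree, hdeg]
    refine lt_of_le_of_lt (Polynomial.degree_sum_le _ _) ?_
    rw [Finset.sup_lt_iff (by exact_mod_cast WithBot.bot_lt_coe N)]
    intro k _
    refine lt_of_le_of_lt (Polynomial.degree_C_mul_X_pow_le _ _) ?_
    exact_mod_cast k.isLt
  have hr0 : r = 0 := Polynomial.eq_zero_of_dvd_of_degree_lt hdvdp hrdeg
  funext k
  have : r.coeff (k : ℕ) = cv k := by
    rw [hr, Polynomial.finset_sum_coeff]
    rw [Finset.sum_eq_single k]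
    · simp [Polynomial.coeff_C_mul, Polynomial.coeff_X_pow]
    · intro b _ hb
      have hbk : (k : ℕ) ≠ (b : ℕ) := fun hh => hb (Fin.ext hh.symm)
      simp [Polynomial.coeff_C_mul, Polynomial.coeff_X_pow, hbk]
    · simp
  rw [← this, hr0, Polynomial.coeff_zero, Pi.zero_apply]

end StmtAux


noncomputable section StmtAuxG

open Matrix Polynomial

variable {n : ℕ} (P : StackPartition n)

/-! ### `sE` combinatorics -/

lemma sE_monoA : Monotone P.sE := by
  intro a b hab
  apply Finset.sum_le_sum
  intro i _
  split_ifs with h1 h2 <;> omega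

lemma sE_zeroA : P.sE 0 = 0 := by simp [StackPartition.sE]

lemma sE_succA (a : ℕ) (ha : a < P.t) : P.sE (a + 1) = P.sE a + P.l ⟨a, ha⟩ := by
  unfold StackPartition.sE
  have hsplit : ∀ i : Fin P.t, (if (i : ℕ) < a + 1 then P.l i else 0)
      = (if (i : ℕ) < a then P.l i else 0) + (if (i : ℕ) = a then P.l i else 0) := by
    intro i; split_ifs <;> omega
  rw [Finset.sum_congr rfl fun i _ => hsplit i, Finset.sum_add_distrib]
  congr 1
  rw [Finset.sum_eq_single (⟨a, ha⟩ : Fin P.t)]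
  · simp
  · intro b _ hb
    rw [if_neg (fun hh => hb (Fin.ext hh))]
  · simp

lemma sE_succA' (i : Fin P.t) : P.sE ((i : ℕ) + 1) = P.sE i + P.l i := by
  rw [sE_succA P (i : ℕ) i.isLt]

lemma sE_strictA {a b : ℕ} (hab : a < b) (hb : b ≤ P.t) : P.sE a < P.sE b := by
  have h1 : a < P.t := by omega
  calc P.sE a < P.sE (a + 1) := by
        rw [sE_succA P a h1]; have := P.l_pos ⟨a, h1⟩; omega
    _ ≤ P.sE b := sE_monoA P (by omega)

lemma block_uniqueA {a b : ℕ} (ha : a < P.t) (hb : b < P.t) {c : ℕ}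
    (h1 : P.sE a ≤ c) (h2 : c < P.sE (a + 1)) (h3 : P.sE b ≤ c) (h4 : c < P.sE (b + 1)) :
    a = b := by
  by_contra hne
  rcases Nat.lt_or_ge a b with h | h
  · have := sE_monoA P (show a + 1 ≤ b by omega); omega
  · have := sE_monoA P (show b + 1 ≤ a by omega); omega

lemma eq_succ_of_sEA {i b : ℕ} (hb : b ≤ P.t)
    (h5 : P.sE i < P.sE b) (h6 : P.sE b ≤ P.sE (i + 1)) : b = i + 1 := by
  by_contra hne
  rcases Nat.lt_or_ge b (i + 1) with hlt | hge
  · have := sE_monoA P (show b ≤ i by omega); omega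
  · have := sE_strictA P (show i + 1 < b by omega) hb; omega

lemma exists_blockA : ∀ b : ℕ, b ≤ P.t → ∀ c : ℕ, c < P.sE b →
    ∃ a : ℕ, ∃ ha : a < P.t, a < b ∧ P.sE a ≤ c ∧ c < P.sE (a + 1) := by
  intro b
  induction b with
  | zero => intro _ c hc; rw [sE_zeroA] at hc; omega
  | succ b ih =>
    intro hb c hc
    rcases Nat.lt_or_ge c (P.sE b) with h | h
    · obtain ⟨a, ha, h1, h2, h3⟩ := ih (by omega) c h
      exact ⟨a, ha, by omega, h2, h3⟩
    · exact ⟨b, by omega, by omega, h, hc⟩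

/-! ### Columns of `G` -/

variable (lam : Params P) (j : Fin P.t)

/-- the `i`-th stack polynomial `∏ (X - λ_{i,k})`. -/
def qpolyA (i : Fin P.t) : ℂ[X] := ∏ k, ((X : ℂ[X]) - C (lam i k))

lemma qpolyA_monic (i : Fin P.t) : (qpolyA P lam i).Monic :=
  Polynomial.monic_prod_of_monic _ _ fun k _ => Polynomial.monic_X_sub_C _

lemma qpolyA_natDegree (i : Fin P.t) : (qpolyA P lam i).natDegree = P.l i := by
  unfold qpolyA
  rw [Polynomial.natDegree_prod _ _ (fun k _ => Polynomial.X_sub_C_ne_zero _)]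
  simp [Polynomial.natDegree_X_sub_C]

lemma GEntry_colA {i : Fin P.t} (hij : (i : ℕ) ≤ (j : ℕ)) {c : ℕ}
    (hc1 : P.sE i ≤ c) (hc2 : c < P.sE ((i : ℕ) + 1)) {r : ℕ} (hr : r < P.sE ((j : ℕ) + 1)) :
    GEntry P lam j r c
      = (if P.sE i ≤ r ∧ r < P.sE ((i : ℕ) + 1)
          then genCompE (P.l i) (lam i) (r - P.sE i) (c - P.sE i) else 0)
        + (if r = P.sE ((i : ℕ) + 1) ∧ c + 1 = P.sE ((i : ℕ) + 1) then 1 else 0) := by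
  unfold GEntry
  congr 1
  · rw [Finset.sum_eq_single i]
    · by_cases h : P.sE i ≤ r ∧ r < P.sE ((i : ℕ) + 1)
      · rw [if_pos ⟨hij, h.1, h.2, hc1, hc2⟩, if_pos h]
      · rw [if_neg (fun hh => h ⟨hh.2.1, hh.2.2.1⟩), if_neg h]
    · intro b _ hb
      rw [if_neg]
      intro hh
      exact hb (Fin.ext (block_uniqueA P b.isLt i.isLt hh.2.2.2.1 hh.2.2.2.2 hc1 hc2))
    · intro h; exact absurd (Finset.mem_univ i) h
  · by_cases hcase : r = P.sE ((i : ℕ) + 1) ∧ c + 1 = P.sE ((i : ℕ) + 1)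
    · have hij' : (i : ℕ) < (j : ℕ) := by
        rcases Nat.lt_or_ge (i : ℕ) (j : ℕ) with h | h
        · exact h
        · exfalso
          have h2 : (i : ℕ) = (j : ℕ) := le_antisymm hij h
          rw [hcase.1, h2] at hr
          exact lt_irrefl _ hr
      have hi1t : (i : ℕ) + 1 < P.t := lt_of_le_of_lt hij' j.isLt
      set i1 : Fin P.t := ⟨(i : ℕ) + 1, hi1t⟩ with hi1def
      have hi1 : (i1 : ℕ) = (i : ℕ) + 1 := rfl
      rw [if_pos hcase, Finset.sum_eq_single i1]
      · rw [if_pos ⟨by omega, by rw [hi1]; omega, by rw [hi1]; exact hcase.1,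
          by rw [hi1]; exact hcase.2⟩]
      · intro b _ hb
        rw [if_neg]
        intro hh
        apply hb
        apply Fin.ext
        rw [hi1]
        have hb1 : P.sE (b : ℕ) = c + 1 := hh.2.2.2.symm
        exact eq_succ_of_sEA P b.isLt.le (by omega) (by omega)
      · intro h; exact absurd (Finset.mem_univ i1) h
    · rw [if_neg hcase]
      apply Finset.sum_eq_zero
      intro b _
      rw [if_neg]
      intro hh
      have hb1 : P.sE (b : ℕ) = c + 1 := hh.2.2.2.symm
      have hbe : (b : ℕ) = (i : ℕ) + 1 :=
        eq_succ_of_sEA P b.isLt.le (by omega) (by omega)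
      refine hcase ⟨?_, ?_⟩
      · rw [← hbe]; exact hh.2.2.1
      · rw [← hbe]; exact hh.2.2.2

lemma colG1A {i : Fin P.t} (hij : (i : ℕ) ≤ (j : ℕ)) {k : ℕ} (hk : k + 1 < P.l i) :
    Gm P lam j *ᵥ evA (P.sE ((j : ℕ) + 1)) (P.sE i + k)
      = evA (P.sE ((j : ℕ) + 1)) (P.sE i + k + 1) := by
  have hsucc : P.sE ((i : ℕ) + 1) = P.sE i + P.l i := sE_succA' P i
  have hsle : P.sE ((i : ℕ) + 1) ≤ P.sE ((j : ℕ) + 1) := sE_monoA P (by omega)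
  have hcN : P.sE i + k < P.sE ((j : ℕ) + 1) := by omega
  funext r
  rw [mulVec_evA _ hcN r]
  have hG : Gm P lam j r ⟨P.sE i + k, hcN⟩ = GEntry P lam j (r : ℕ) (P.sE i + k) := rfl
  rw [hG, GEntry_colA P lam j hij (Nat.le_add_right _ _) (by omega) r.isLt,
    Nat.add_sub_cancel_left]
  rw [if_neg (show ¬((r : ℕ) = P.sE ((i : ℕ) + 1) ∧ P.sE i + k + 1 = P.sE ((i : ℕ) + 1))
    by omega), add_zero]
  simp only [evA]
  by_cases hr : (r : ℕ) = P.sE i + k + 1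
  · rw [if_pos hr, if_pos (show P.sE i ≤ (r : ℕ) ∧ (r : ℕ) < P.sE ((i : ℕ) + 1) by omega)]
    have hrs : (r : ℕ) - P.sE i = k + 1 := by omega
    rw [hrs]
    simp only [genCompE]
    split_ifs <;> first | rfl | (exfalso; omega)
  · rw [if_neg hr]
    by_cases hrb : P.sE i ≤ (r : ℕ) ∧ (r : ℕ) < P.sE ((i : ℕ) + 1)
    · rw [if_pos hrb]
      simp only [genCompE]
      split_ifs <;> first | rfl | (exfalso; omega)
    · rw [if_neg hrb]

lemma colG2A {i : Fin P.t} (hij : (i : ℕ) ≤ (j : ℕ)) :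
    Gm P lam j *ᵥ evA (P.sE ((j : ℕ) + 1)) (P.sE i + (P.l i - 1))
      = evA (P.sE ((j : ℕ) + 1)) (P.sE ((i : ℕ) + 1))
        - ∑ k ∈ Finset.range (P.l i),
            (qpolyA P lam i).coeff k • evA (P.sE ((j : ℕ) + 1)) (P.sE i + k) := by
  have hl : 0 < P.l i := P.l_pos i
  have hsucc : P.sE ((i : ℕ) + 1) = P.sE i + P.l i := sE_succA' P i
  have hsle : P.sE ((i : ℕ) + 1) ≤ P.sE ((j : ℕ) + 1) := sE_monoA P (by omega)
  have hcN : P.sE i + (P.l i - 1) < P.sE ((j : ℕ) + 1) := by omega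
  funext r
  rw [mulVec_evA _ hcN r]
  have hG : Gm P lam j r ⟨P.sE i + (P.l i - 1), hcN⟩
      = GEntry P lam j (r : ℕ) (P.sE i + (P.l i - 1)) := rfl
  rw [hG, GEntry_colA P lam j hij (Nat.le_add_right _ _) (by omega) r.isLt,
    Nat.add_sub_cancel_left]
  simp only [Pi.sub_apply, Finset.sum_apply, Pi.smul_apply, smul_eq_mul, evA]
  by_cases hrb : P.sE i ≤ (r : ℕ) ∧ (r : ℕ) < P.sE ((i : ℕ) + 1)
  · rw [if_pos hrb, if_neg (show ¬((r : ℕ) = P.sE ((i : ℕ) + 1)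
        ∧ P.sE i + (P.l i - 1) + 1 = P.sE ((i : ℕ) + 1)) by omega), add_zero,
      if_neg (show ¬((r : ℕ) = P.sE ((i : ℕ) + 1)) by omega)]
    have hsum : ∑ k ∈ Finset.range (P.l i),
        (qpolyA P lam i).coeff k * (if (r : ℕ) = P.sE i + k then (1 : ℂ) else 0)
        = (qpolyA P lam i).coeff ((r : ℕ) - P.sE i) := by
      rw [Finset.sum_eq_single ((r : ℕ) - P.sE i)]
      · rw [if_pos (by omega), mul_one]
      · intro b _ hb; rw [if_neg (by omega), mul_zero]
      · intro hmem; exact absurd (Finset.mem_range.mpr (by omega)) hmem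
    rw [hsum]
    simp only [genCompE, qpolyA]
    have hf : P.l i - 1 + 1 = P.l i := by omega
    split_ifs <;> first | ring1 | (exfalso; omega)
  · rw [if_neg hrb]
    have hsum : ∑ k ∈ Finset.range (P.l i),
        (qpolyA P lam i).coeff k * (if (r : ℕ) = P.sE i + k then (1 : ℂ) else 0)
        = 0 := by
      apply Finset.sum_eq_zero
      intro b hb
      rw [if_neg (by have := Finset.mem_range.mp hb; omega), mul_zero]
    rw [hsum, sub_zero, zero_add]
    by_cases hre : (r : ℕ) = P.sE ((i : ℕ) + 1)
    · rw [if_pos ⟨hre, by omega⟩, if_pos hre]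
    · rw [if_neg (fun hh => hre hh.1), if_neg hre]

end StmtAuxG


noncomputable section StmtAuxG2

open Matrix Polynomial

variable {n : ℕ} (P : StackPartition n) (lam : Params P) (j : Fin P.t)

lemma powG_evA {i : Fin P.t} (hij : (i : ℕ) ≤ (j : ℕ)) :
    ∀ k, k < P.l i → ((Gm P lam j) ^ k) *ᵥ evA (P.sE ((j : ℕ) + 1)) (P.sE i)
      = evA (P.sE ((j : ℕ) + 1)) (P.sE i + k) := by
  intro k
  induction k with
  | zero =>
    intro _
    rw [pow_zero, Matrix.one_mulVec]
    rfl
  | succ k ih =>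
    intro hk
    rw [pow_succ', ← Matrix.mulVec_mulVec, ih (by omega), colG1A P lam j hij (by omega),
      Nat.add_assoc]

lemma aeval_q_evA {i : Fin P.t} (hij : (i : ℕ) ≤ (j : ℕ)) :
    (Polynomial.aeval (Gm P lam j) (qpolyA P lam i)) *ᵥ evA (P.sE ((j : ℕ) + 1)) (P.sE i)
      = evA (P.sE ((j : ℕ) + 1)) (P.sE ((i : ℕ) + 1)) := by
  have hl : 0 < P.l i := P.l_pos i
  rw [Polynomial.aeval_eq_sum_range, qpolyA_natDegree, sum_mulVecA]
  simp only [Matrix.smul_mulVec]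
  rw [Finset.sum_range_succ]
  have hlast : ((Gm P lam j) ^ (P.l i)) *ᵥ evA (P.sE ((j : ℕ) + 1)) (P.sE i)
      = evA (P.sE ((j : ℕ) + 1)) (P.sE ((i : ℕ) + 1))
        - ∑ k ∈ Finset.range (P.l i),
            (qpolyA P lam i).coeff k • evA (P.sE ((j : ℕ) + 1)) (P.sE i + k) := by
    conv_lhs => rw [show P.l i = (P.l i - 1) + 1 by omega]
    rw [pow_succ', ← Matrix.mulVec_mulVec, powG_evA P lam j hij (P.l i - 1) (by omega),
      colG2A P lam j hij]
  have hcoef : (qpolyA P lam i).coeff (P.l i) = 1 := by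
    have h1 := (qpolyA_monic P lam i).coeff_natDegree
    rwa [qpolyA_natDegree] at h1
  rw [Finset.sum_congr rfl (fun k hk => by
    rw [powG_evA P lam j hij k (Finset.mem_range.mp hk)]), hlast, hcoef, one_smul]
  abel

/-- partial products of the stack polynomials. -/
def FpA (step : ℕ) : ℂ[X] := ∏ i : Fin P.t, if (i : ℕ) < step then qpolyA P lam i else 1

lemma FpA_zero : FpA P lam 0 = 1 := by
  unfold FpA
  apply Finset.prod_eq_one
  intro i _
  rw [if_neg (by omega)]

lemma FpA_succ (a : ℕ) (ha : a < P.t) :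
    FpA P lam (a + 1) = FpA P lam a * qpolyA P lam ⟨a, ha⟩ := by
  unfold FpA
  have hsplit : ∀ i : Fin P.t, (if (i : ℕ) < a + 1 then qpolyA P lam i else 1)
      = (if (i : ℕ) < a then qpolyA P lam i else 1)
        * (if (i : ℕ) = a then qpolyA P lam i else 1) := by
    intro i
    rcases lt_trichotomy (i : ℕ) a with h | h | h
    · rw [if_pos (by omega), if_pos h, if_neg (by omega), mul_one]
    · rw [if_pos (by omega), if_neg (by omega), if_pos h, one_mul]
    · rw [if_neg (by omega), if_neg (by omega), if_neg (by omega), mul_one]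
  rw [Finset.prod_congr rfl fun i _ => hsplit i, Finset.prod_mul_distrib]
  congr 1
  rw [Finset.prod_eq_single (⟨a, ha⟩ : Fin P.t)]
  · rw [if_pos rfl]
  · intro b _ hb; rw [if_neg (fun hh => hb (Fin.ext hh))]
  · intro h; exact absurd (Finset.mem_univ _) h

lemma FpA_evA : ∀ a, a ≤ (j : ℕ) + 1 →
    (Polynomial.aeval (Gm P lam j) (FpA P lam a)) *ᵥ evA (P.sE ((j : ℕ) + 1)) 0
      = evA (P.sE ((j : ℕ) + 1)) (P.sE a) := by
  intro a
  induction a with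
  | zero =>
    intro _
    rw [FpA_zero, _root_.map_one, Matrix.one_mulVec, sE_zeroA]
  | succ a ih =>
    intro ha
    have hat : a < P.t := by have := j.isLt; omega
    have hq : (Polynomial.aeval (Gm P lam j) (qpolyA P lam ⟨a, hat⟩))
          *ᵥ evA (P.sE ((j : ℕ) + 1)) (P.sE a)
        = evA (P.sE ((j : ℕ) + 1)) (P.sE (a + 1)) :=
      aeval_q_evA P lam j (i := ⟨a, hat⟩) (show a ≤ (j : ℕ) by omega)
    rw [FpA_succ P lam a hat, mul_comm, _root_.map_mul, ← Matrix.mulVec_mulVec,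
      ih (by omega), hq]

/-- the big product polynomial. -/
lemma pPoly_eqA :
    ((lamUpTo P lam (j : ℕ)).map (fun z => (X : ℂ[X]) - C z)).prod
      = FpA P lam ((j : ℕ) + 1) := by
  unfold lamUpTo FpA
  have h1 : Multiset.map (fun z => (X : ℂ[X]) - C z)
        (∑ i : Fin P.t, if (i : ℕ) ≤ (j : ℕ) then stackMultiset P lam i else 0)
      = ∑ i : Fin P.t, Multiset.map (fun z => (X : ℂ[X]) - C z)
          (if (i : ℕ) ≤ (j : ℕ) then stackMultiset P lam i else 0) := by
    classical
    induction (Finset.univ : Finset (Fin P.t)) using Finset.cons_induction with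
    | empty => simp
    | cons a s has ih => rw [Finset.sum_cons, Finset.sum_cons, Multiset.map_add, ih]
  rw [h1, Multiset.prod_sum]
  refine Finset.prod_congr rfl fun i _ => ?_
  by_cases h : (i : ℕ) ≤ (j : ℕ)
  · rw [if_pos h, if_pos (by omega)]
    unfold stackMultiset qpolyA
    rw [Multiset.map_map, Finset.prod_eq_multiset_prod]
    rfl
  · rw [if_neg h, if_neg (by omega), Multiset.map_zero, Multiset.prod_zero]

lemma card_lamUpToA : Multiset.card (lamUpTo P lam (j : ℕ)) = P.sE ((j : ℕ) + 1) := by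
  unfold lamUpTo StackPartition.sE
  rw [Multiset.card_sum]
  refine Finset.sum_congr rfl fun i _ => ?_
  by_cases h : (i : ℕ) ≤ (j : ℕ)
  · rw [if_pos h, if_pos (by omega)]
    unfold stackMultiset
    rw [Multiset.card_map]
    exact Finset.card_univ.trans (Fintype.card_fin _)
  · rw [if_neg h, if_neg (by omega), Multiset.card_zero]

/-! ### triangularity of the `G`-side cyclic matrix -/

lemma G_hessA (r c : Fin (P.sE ((j : ℕ) + 1))) (hrc : (c : ℕ) + 1 < (r : ℕ)) :
    Gm P lam j r c = 0 := by
  have hG : Gm P lam j r c = GEntry P lam j (r : ℕ) (c : ℕ) := rfl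
  rw [hG]
  unfold GEntry
  have h1 : ∑ i : Fin P.t,
      (if (i : ℕ) ≤ (j : ℕ) ∧ P.sE i ≤ (r : ℕ) ∧ (r : ℕ) < P.sE ((i : ℕ) + 1)
          ∧ P.sE i ≤ (c : ℕ) ∧ (c : ℕ) < P.sE ((i : ℕ) + 1) then
        genCompE (P.l i) (lam i) ((r : ℕ) - P.sE i) ((c : ℕ) - P.sE i)
      else 0) = 0 := by
    apply Finset.sum_eq_zero
    intro b _
    split_ifs with h
    · have hsb : P.sE ((b : ℕ) + 1) = P.sE b + P.l b := sE_succA' P b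
      simp only [genCompE]
      split_ifs <;> first | rfl | (exfalso; omega)
    · rfl
  have h2 : ∑ i : Fin P.t,
      (if 1 ≤ (i : ℕ) ∧ (i : ℕ) ≤ (j : ℕ) ∧ (r : ℕ) = P.sE i ∧ (c : ℕ) + 1 = P.sE i
        then (1 : ℂ) else 0) = 0 := by
    apply Finset.sum_eq_zero
    intro b _
    rw [if_neg (by omega)]
  rw [h1, h2, add_zero]

lemma exists_blockA' (c : ℕ) (hc : c < P.sE ((j : ℕ) + 1)) :
    ∃ i : Fin P.t, (i : ℕ) ≤ (j : ℕ) ∧ P.sE i ≤ c ∧ c < P.sE ((i : ℕ) + 1) := by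
  obtain ⟨a, hat, haj, h1, h2⟩ := exists_blockA P ((j : ℕ) + 1) j.isLt c hc
  exact ⟨⟨a, hat⟩, Nat.lt_succ_iff.mp haj, h1, h2⟩

lemma G_subdiagA (c r : Fin (P.sE ((j : ℕ) + 1))) (hrc : (r : ℕ) = (c : ℕ) + 1) :
    Gm P lam j r c = 1 := by
  obtain ⟨i, hij, h1, h2⟩ := exists_blockA' P j (c : ℕ) c.isLt
  have hsb : P.sE ((i : ℕ) + 1) = P.sE i + P.l i := sE_succA' P i
  have hG : Gm P lam j r c = GEntry P lam j (r : ℕ) (c : ℕ) := rfl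
  rw [hG, GEntry_colA P lam j hij h1 h2 r.isLt]
  by_cases hce : (c : ℕ) + 1 = P.sE ((i : ℕ) + 1)
  · rw [if_neg (by omega), if_pos (by omega), zero_add]
  · rw [if_pos (show P.sE i ≤ (r : ℕ) ∧ (r : ℕ) < P.sE ((i : ℕ) + 1) by omega),
      if_neg (by omega), add_zero]
    simp only [genCompE]
    split_ifs <;> first | rfl | (exfalso; omega)

lemma QG_triA : ∀ k : ℕ, k < P.sE ((j : ℕ) + 1) →
    (∀ r : Fin (P.sE ((j : ℕ) + 1)), (k : ℕ) < (r : ℕ) →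
      (((Gm P lam j) ^ k) *ᵥ evA (P.sE ((j : ℕ) + 1)) 0) r = 0)
    ∧ (∀ r : Fin (P.sE ((j : ℕ) + 1)), (r : ℕ) = k →
      (((Gm P lam j) ^ k) *ᵥ evA (P.sE ((j : ℕ) + 1)) 0) r = 1) := by
  intro k
  induction k with
  | zero =>
    intro _
    constructor
    · intro r hr
      rw [pow_zero, Matrix.one_mulVec]
      simp only [evA]
      rw [if_neg (by omega)]
    · intro r hr
      rw [pow_zero, Matrix.one_mulVec]
      simp only [evA]
      rw [if_pos hr]
  | succ k ih =>
    intro hkN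
    have ihh := ih (by omega)
    have hstep : ∀ r : Fin (P.sE ((j : ℕ) + 1)),
        (((Gm P lam j) ^ (k + 1)) *ᵥ evA (P.sE ((j : ℕ) + 1)) 0) r
        = ∑ c : Fin (P.sE ((j : ℕ) + 1)),
            Gm P lam j r c * (((Gm P lam j) ^ k) *ᵥ evA (P.sE ((j : ℕ) + 1)) 0) c := by
      intro r
      rw [pow_succ', ← Matrix.mulVec_mulVec]
      simp [Matrix.mulVec, dotProduct]
    constructor
    · intro r hr
      rw [hstep]
      apply Finset.sum_eq_zero
      intro c _
      rcases Nat.lt_or_ge k (c : ℕ) with h | h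
      · rw [ihh.1 c h, mul_zero]
      · rw [G_hessA P lam j r c (by omega), zero_mul]
    · intro r hr
      rw [hstep, Finset.sum_eq_single (⟨k, by omega⟩ : Fin (P.sE ((j : ℕ) + 1)))]
      · rw [ihh.2 _ rfl, G_subdiagA P lam j _ r (by simp [hr]), mul_one]
      · intro c _ hc
        rcases Nat.lt_or_ge k (c : ℕ) with h | h
        · rw [ihh.1 c h, mul_zero]
        · have hck : (c : ℕ) < k := by
            have : (c : ℕ) ≠ k := fun hh => hc (Fin.ext hh)
            omega
          rw [G_hessA P lam j r c (by omega), zero_mul]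
      · intro h; exact absurd (Finset.mem_univ _) h

lemma QG_detA : IsUnit (powMatA (Gm P lam j) (evA (P.sE ((j : ℕ) + 1)) 0)).det := by
  rw [det_one_of_unitriangularA]
  · exact isUnit_one
  · intro r k hk
    exact (QG_triA P lam j (k : ℕ) k.isLt).1 r hk
  · intro r
    exact (QG_triA P lam j (r : ℕ) r.isLt).2 r rfl

end StmtAuxG2


noncomputable section StmtAuxFinal

open Matrix Polynomial

lemma prodXsubC_monicA (s : Multiset ℂ) :
    ((s.map (fun z => (X : ℂ[X]) - C z)).prod).Monic :=
  Polynomial.monic_multiset_prod_of_monic _ _ fun z _ => Polynomial.monic_X_sub_C z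

lemma prodXsubC_natDegreeA (s : Multiset ℂ) :
    ((s.map (fun z => (X : ℂ[X]) - C z)).prod).natDegree = Multiset.card s := by
  rw [Polynomial.natDegree_multiset_prod_of_monic _ (by
    intro f hf
    obtain ⟨z, _, rfl⟩ := Multiset.mem_map.mp hf
    exact Polynomial.monic_X_sub_C z), Multiset.map_map]
  simp only [Function.comp, Polynomial.natDegree_X_sub_C]
  rw [Multiset.map_const', Multiset.sum_replicate, smul_eq_mul, mul_one]

lemma jordan_conj_generic (s : Multiset ℂ) (N : ℕ) (hcard : Multiset.card s = N)
    (e : JordanIdx s ≃ Fin N) :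
    ((jordanOfMultiset s).submatrix (⇑e.symm) (⇑e.symm))
          * powMatA ((jordanOfMultiset s).submatrix (⇑e.symm) (⇑e.symm)) (jvA s ∘ ⇑e.symm)
        = powMatA ((jordanOfMultiset s).submatrix (⇑e.symm) (⇑e.symm)) (jvA s ∘ ⇑e.symm)
          * compMA N ((s.map (fun z => (X : ℂ[X]) - C z)).prod)
      ∧ IsUnit (powMatA ((jordanOfMultiset s).submatrix (⇑e.symm) (⇑e.symm))
          (jvA s ∘ ⇑e.symm)).det := by
  classical
  set J := jordanOfMultiset s with hJ
  set J' := J.submatrix (⇑e.symm) (⇑e.symm) with hJ'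
  set v' : Fin N → ℂ := jvA s ∘ ⇑e.symm with hv'
  set p := (s.map (fun z => (X : ℂ[X]) - C z)).prod with hp
  have hmon : p.Monic := prodXsubC_monicA s
  have hdeg : p.natDegree = N := by rw [hp, prodXsubC_natDegreeA, hcard]
  have hre : ∀ M : Matrix (JordanIdx s) (JordanIdx s) ℂ,
      (M.submatrix (⇑e.symm) (⇑e.symm)) *ᵥ v' = (M *ᵥ jvA s) ∘ ⇑e.symm := by
    intro M
    rw [hv', Matrix.submatrix_mulVec_equiv]
    have h1 : (jvA s ∘ ⇑e.symm) ∘ ⇑e.symm.symm = jvA s := by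
      funext x
      simp
    rw [h1]
  have hsub : ∀ M : Matrix (JordanIdx s) (JordanIdx s) ℂ,
      M.submatrix (⇑e.symm) (⇑e.symm) = Matrix.reindexAlgEquiv ℂ ℂ e M := by
    intro M
    rw [Matrix.reindexAlgEquiv_apply, Matrix.reindex_apply]
  have hpow : ∀ k : ℕ, (J' ^ k) *ᵥ v' = ((J ^ k) *ᵥ jvA s) ∘ ⇑e.symm := by
    intro k
    have h1 : J' ^ k = (J ^ k).submatrix (⇑e.symm) (⇑e.symm) := by
      rw [hJ', hsub, hsub, ← map_pow]
    rw [h1, hre]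
  have hJ0 : (Polynomial.aeval J' p) *ᵥ v' = 0 := by
    have h1 : Polynomial.aeval J' p = (Polynomial.aeval J p).submatrix (⇑e.symm) (⇑e.symm) := by
      rw [hJ', hsub, hsub]
      exact Polynomial.aeval_algHom_apply (Matrix.reindexAlgEquiv ℂ ℂ e) J p
    rw [h1, hre, hJ, hp, jordan_aeval_prodA s]
    funext x
    rfl
  refine ⟨key_conjA J' v' p hmon hdeg hJ0, ?_⟩
  rw [← Matrix.isUnit_iff_isUnit_det, ← Matrix.mulVec_injective_iff_isUnit]
  have hker : ∀ cv : Fin N → ℂ, powMatA J' v' *ᵥ cv = 0 → cv = 0 := by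
    intro cv hcv
    apply jordan_indepA s N hcard cv
    intro x
    have hx := congrFun hcv (e x)
    simp only [Matrix.mulVec, dotProduct, powMatA, Matrix.of_apply, Pi.zero_apply] at hx
    rw [← hx]
    refine Finset.sum_congr rfl fun k _ => ?_
    have hterm : (∑ x1 : Fin N, (J' ^ (k : ℕ)) (e x) x1 * v' x1)
        = ((J' ^ (k : ℕ)) *ᵥ v') (e x) := rfl
    rw [hterm, hpow (k : ℕ)]
    simp [mul_comm, hJ]
  intro c1 c2 hcc
  have h3 : powMatA J' v' *ᵥ (c1 - c2) = 0 := by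
    rw [Matrix.mulVec_sub, hcc, sub_self]
  exact sub_eq_zero.mp (hker _ h3)

end StmtAuxFinal

/-- For a canonical plane matrix `A ∈ 𝒫_π` with parameters
`λ_{j,i}`, each `G_j` is similar to `⊕_z J_{α(z,j)}(z)`, the direct sum over
the distinct `z` with `α(z,j) > 0` of one Jordan block of size `α(z,j)` per
eigenvalue (here `α(z,j)` is the multiplicity of `z` among all parameters of
stacks `1,...,j`, encoded by the multiset `lamUpTo P lam j`). -/
theorem statement6 (n : ℕ) (hn : 2 ≤ n) (P : StackPartition n) (lam : Params P)
    (j : Fin P.t) :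
    ∃ e : JordanIdx (lamUpTo P lam (j : ℕ)) ≃ Fin (P.sE ((j : ℕ) + 1)),
      MatrixSimilar (Gm P lam j)
        ((jordanOfMultiset (lamUpTo P lam (j : ℕ))).submatrix e.symm e.symm) := by
  classical
  have hcard : Fintype.card (JordanIdx (lamUpTo P lam (j : ℕ))) = P.sE ((j : ℕ) + 1) := by
    rw [Fintype.card_sigma]
    simp only [Fintype.card_fin]
    rw [Finset.sum_coe_sort _ (fun z => (lamUpTo P lam (j : ℕ)).count z),
      Multiset.toFinset_sum_count_eq, card_lamUpToA]
  have e : JordanIdx (lamUpTo P lam (j : ℕ)) ≃ Fin (P.sE ((j : ℕ) + 1)) :=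
    Fintype.equivFinOfCardEq hcard
  refine ⟨e, ?_⟩
  have hmon : (((lamUpTo P lam (j : ℕ)).map (fun z => (X : ℂ[X]) - C z)).prod).Monic :=
    prodXsubC_monicA _
  have hdeg : (((lamUpTo P lam (j : ℕ)).map (fun z => (X : ℂ[X]) - C z)).prod).natDegree
      = P.sE ((j : ℕ) + 1) := by
    rw [prodXsubC_natDegreeA, card_lamUpToA]
  have hG0 : (Polynomial.aeval (Gm P lam j)
        (((lamUpTo P lam (j : ℕ)).map (fun z => (X : ℂ[X]) - C z)).prod))
        *ᵥ evA (P.sE ((j : ℕ) + 1)) 0 = 0 := by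
    rw [pPoly_eqA, FpA_evA P lam j ((j : ℕ) + 1) le_rfl, evA_out le_rfl]
  have hGconj := key_conjA (Gm P lam j) (evA (P.sE ((j : ℕ) + 1)) 0) _ hmon hdeg hG0
  have hGdet := QG_detA P lam j
  obtain ⟨hJconj, hJdet⟩ := jordan_conj_generic (lamUpTo P lam (j : ℕ))
    (P.sE ((j : ℕ) + 1)) (card_lamUpToA P lam j) e
  exact similar_of_conjA (Gm P lam j) _
    (compMA (P.sE ((j : ℕ) + 1)) (((lamUpTo P lam (j : ℕ)).map (fun z => (X : ℂ[X]) - C z)).prod))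
    _ _ hGconj hJconj hGdet hJdet
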